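/- Define polynomials q_α ∈ ℚ[X] recursively by q_0(X) = 1 and q_{α+1}(X) = (2X+1)²·q_α(X) − 4X²·q_α(X−1). Then for all integers n ≥ 0 and α ≥ 0, the following binomial-sum identity holds: Σ_{l=0}^{n} C(2n+1, n−l)·(2l+1)^{2α+1} = q_α(n) · (2n+1) · C(2n, n), where C(m, j) denotes the binomial coefficient. -/

import Mathlib

open Polynomial

/-- The polynomials `q_α` defined by `q_0(X) = 1` and
`q_{α+1}(X) = (2X+1)²·q_α(X) − 4X²·q_α(X−1)`. -/
noncomputable def qPoly : ℕ → Polynomial ℚ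
  | 0 => 1
  | α + 1 => (2 * X + 1) ^ 2 * qPoly α - 4 * X ^ 2 * (qPoly α).comp (X - 1)

lemma nat_fact1 (n l : ℕ) (h : l ≤ n) :
    (2*n+1).choose (n-l) * (n+l+1) = (2*n+1) * (2*n).choose (n+l) := by
  have hsym : (2*n+1).choose (n-l) = (2*n+1).choose (n+l+1) := by
    have h2 := Nat.choose_symm (show n+l+1 ≤ 2*n+1 by omega)
    rw [show 2*n+1 - (n+l+1) = n - l from by omega] at h2
    exact h2
  have h2 := Nat.add_one_mul_choose_eq (2*n) (n+l)
  rw [hsym]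
  simpa [Nat.succ_eq_add_one, mul_comm] using h2.symm

lemma nat_fact2 (n l : ℕ) (h : l ≤ n) :
    (2*n+1).choose (n-l) * (n-l) = (2*n+1) * (2*n).choose (n+l+1) := by
  rcases eq_or_lt_of_le h with rfl | hlt
  · simp [Nat.choose_eq_zero_of_lt (show 2*l < l+l+1 by omega)]
  · have h2 := Nat.add_one_mul_choose_eq (2*n) (n-l-1)
    rw [show n-l-1+1 = n-l from by omega] at h2
    have hsym : (2*n).choose (n-l-1) = (2*n).choose (n+l+1) := by
      have h3 := Nat.choose_symm (show n+l+1 ≤ 2*n by omega)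
      rw [show 2*n - (n+l+1) = n - l - 1 from by omega] at h3
      exact h3
    rw [← hsym]
    linarith [h2]

lemma term_eq (n l : ℕ) (h : l ≤ n) :
    ((2*n+1).choose (n-l) : ℚ) * (2*l+1)
      = (2*n+1) * ((2*n).choose (n+l)) - (2*n+1) * ((2*n).choose (n+(l+1))) := by
  have h1 : (((2*n+1).choose (n-l) : ℚ)) * ((n:ℚ)+l+1) = (2*n+1) * ((2*n).choose (n+l)) := by
    have := congrArg (Nat.cast : ℕ → ℚ) (nat_fact1 n l h)
    push_cast at this; linarith [this]
  have h2 : (((2*n+1).choose (n-l) : ℚ)) * ((n:ℚ)-l) = (2*n+1) * ((2*n).choose (n+(l+1))) := by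
    have := congrArg (Nat.cast : ℕ → ℚ) (nat_fact2 n l h)
    rw [show n+l+1 = n+(l+1) from by omega] at this
    push_cast [Nat.cast_sub h] at this
    linarith [this]
  linarith [h1, h2]

lemma base_case (n : ℕ) :
    ∑ l ∈ Finset.range (n+1), ((2*n+1).choose (n-l) : ℚ) * (2*l+1)
      = (2*n+1) * ((2*n).choose n) := by
  have key := Finset.sum_range_sub'
    (f := fun l => ((2*n+1 : ℚ)) * (((2*n).choose (n+l) : ℕ) : ℚ)) (n+1)
  rw [Finset.sum_congr rfl (fun l hl => term_eq n l
    (Nat.lt_succ_iff.mp (Finset.mem_range.mp hl))), key]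
  rw [Nat.choose_eq_zero_of_lt (show 2*n < n+(n+1) by omega)]
  simp

lemma nat_key (m l : ℕ) (h : l ≤ m) :
    (2*m+3).choose (m+1-l) * ((m+1-l) * (m+l+2)) = (2*m+3) * ((2*m+2) * (2*m+1).choose (m-l)) := by
  have h1 := Nat.add_one_mul_choose_eq (2*m+2) (m-l)
  rw [show m-l+1 = m+1-l from by omega, show 2*m+2+1 = 2*m+3 from by omega] at h1
  -- h1 : (2m+3) * C(2m+2, m-l) = C(2m+3, m+1-l) * (m+1-l)
  have h2 : (2*m+2).choose (m-l) = (2*m+2).choose (m+l+2) := by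
    have h' := Nat.choose_symm (show m+l+2 ≤ 2*m+2 by omega)
    rw [show 2*m+2 - (m+l+2) = m-l from by omega] at h'
    exact h'
  have h3 := Nat.add_one_mul_choose_eq (2*m+1) (m+l+1)
  rw [show m+l+1+1 = m+l+2 from by omega, show 2*m+1+1 = 2*m+2 from by omega] at h3
  -- h3 : (2m+2) * C(2m+1, m+l+1) = C(2m+2, m+l+2) * (m+l+2)
  have h4 : (2*m+1).choose (m+l+1) = (2*m+1).choose (m-l) := by
    have h' := Nat.choose_symm (show m+l+1 ≤ 2*m+1 by omega)
    rw [show 2*m+1 - (m+l+1) = m-l from by omega] at h'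
    exact h'.symm
  calc (2*m+3).choose (m+1-l) * ((m+1-l) * (m+l+2))
      = ((2*m+3).choose (m+1-l) * (m+1-l)) * (m+l+2) := by ring
    _ = ((2*m+3) * (2*m+2).choose (m-l)) * (m+l+2) := by rw [h1]
    _ = (2*m+3) * ((2*m+2).choose (m+l+2) * (m+l+2)) := by rw [h2]; ring
    _ = (2*m+3) * ((2*m+2) * (2*m+1).choose (m+l+1)) := by rw [h3]
    _ = (2*m+3) * ((2*m+2) * (2*m+1).choose (m-l)) := by rw [h4]

lemma key_q (m l : ℕ) (h : l ≤ m) :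
    ((2*(m+1)+1).choose (m+1-l) : ℚ) * ((2*((m:ℚ)+1)+1)^2 - (2*(l:ℚ)+1)^2)
      = 8*((m:ℚ)+1)*(2*((m:ℚ)+1)+1) * ((2*m+1).choose (m-l)) := by
  have hc := congrArg (Nat.cast : ℕ → ℚ) (nat_key m l h)
  push_cast [Nat.cast_sub (show l ≤ m+1 by omega)] at hc
  rw [show 2*(m+1)+1 = 2*m+3 from by omega]
  have hm : (2*((m:ℚ)+1)+1)^2 - (2*(l:ℚ)+1)^2 = 4*(((m:ℚ)+1-l)*((m:ℚ)+l+2)) := by ring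
  rw [hm]
  linear_combination 4 * hc

lemma ratio_fact (m : ℕ) :
    ((m:ℚ)+1) * ((2*m+2).choose (m+1)) = 2*(2*(m:ℚ)+1) * ((2*m).choose m) := by
  have h1 := Nat.add_one_mul_choose_eq (2*m+1) m
  rw [show 2*m+1+1 = 2*m+2 from by omega] at h1
  have h2 := Nat.add_one_mul_choose_eq (2*m) m
  have h3 : (2*m+1).choose (m+1) = (2*m+1).choose m := by
    have h' := Nat.choose_symm (show m+1 ≤ 2*m+1 by omega)
    rw [show 2*m+1 - (m+1) = m from by omega] at h'
    exact h'.symm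
  rw [h3] at h2
  have e : (2*m+2) * ((2*m+1) * (2*m).choose m) = (2*m+2).choose (m+1) * (m+1) * (m+1) := by
    rw [h2, ← mul_assoc, h1]
  have ec := congrArg (Nat.cast : ℕ → ℚ) e
  push_cast at ec
  have hm1 : ((m:ℚ)+1) ≠ 0 := by positivity
  apply mul_left_cancel₀ hm1
  linear_combination -ec

lemma qzero (α : ℕ) : (qPoly α).eval (0 : ℚ) = 1 := by
  induction α with
  | zero => simp [qPoly]
  | succ α ih => simp [qPoly, ih]

theorem main_aux (α : ℕ) : ∀ n : ℕ,
    ∑ l ∈ Finset.range (n + 1), ((2 * n + 1).choose (n - l) : ℚ) * (2 * l + 1 : ℚ) ^ (2 * α + 1)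
      = (qPoly α).eval (n : ℚ) * (2 * n + 1 : ℚ) * ((2 * n).choose n : ℚ) := by
  induction α with
  | zero =>
    intro n
    simpa [qPoly] using base_case n
  | succ α ih =>
    intro n
    cases n with
    | zero => simp [qzero]
    | succ m =>
      have expand : ∀ l ∈ Finset.range (m+1+1),
          ((2*(m+1)+1).choose (m+1-l) : ℚ) * (2*(l:ℚ)+1)^(2*(α+1)+1)
            = (2*((m:ℚ)+1)+1)^2 * (((2*(m+1)+1).choose (m+1-l) : ℚ) * (2*(l:ℚ)+1)^(2*α+1))
              - (((2*(m+1)+1).choose (m+1-l) : ℚ) * ((2*((m:ℚ)+1)+1)^2 - (2*(l:ℚ)+1)^2))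
                  * (2*(l:ℚ)+1)^(2*α+1) := by
        intro l _
        have hp : (2*(l:ℚ)+1)^(2*(α+1)+1) = (2*(l:ℚ)+1)^(2*α+1) * (2*(l:ℚ)+1)^2 := by
          rw [← pow_add]; ring_nf
        rw [hp]; ring
      push_cast
      rw [Finset.sum_congr rfl expand, Finset.sum_sub_distrib, ← Finset.mul_sum]
      have hsecond : ∑ l ∈ Finset.range (m+1+1),
          (((2*(m+1)+1).choose (m+1-l) : ℚ) * ((2*((m:ℚ)+1)+1)^2 - (2*(l:ℚ)+1)^2))
              * (2*(l:ℚ)+1)^(2*α+1)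
          = 8*((m:ℚ)+1)*(2*((m:ℚ)+1)+1) * ∑ l ∈ Finset.range (m+1),
              ((2*m+1).choose (m-l) : ℚ) * (2*(l:ℚ)+1)^(2*α+1) := by
        rw [Finset.sum_range_succ]
        have hz : (((2*(m+1)+1).choose (m+1-(m+1)) : ℚ)
            * ((2*((m:ℚ)+1)+1)^2 - (2*((m+1:ℕ):ℚ)+1)^2)) * (2*((m+1:ℕ):ℚ)+1)^(2*α+1) = 0 := by
          push_cast; ring_nf
        rw [hz, add_zero, Finset.mul_sum]
        apply Finset.sum_congr rfl
        intro l hl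
        rw [key_q m l (Nat.lt_succ_iff.mp (Finset.mem_range.mp hl))]
        ring
      rw [hsecond]
      have ih1 := ih (m+1)
      have ih2 := ih m
      push_cast at ih1 ih2
      rw [ih1, ih2]
      have hq : (qPoly (α+1)).eval ((m:ℚ)+1)
          = (2*((m:ℚ)+1)+1)^2 * (qPoly α).eval ((m:ℚ)+1)
            - 4*((m:ℚ)+1)^2 * (qPoly α).eval ((m:ℚ)) := by
        simp [qPoly, eval_comp]
      rw [hq]
      have hr := ratio_fact m
      rw [show 2*(m+1) = 2*m+2 from by omega]
      linear_combination (4*((m:ℚ)+1)*(2*((m:ℚ)+1)+1)*(qPoly α).eval (m:ℚ)) * hr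

/-- The binomial-sum identity
`Σ_{l=0}^{n} C(2n+1, n−l)·(2l+1)^{2α+1} = q_α(n) · (2n+1) · C(2n, n)`. -/
theorem stmt_4 (n α : ℕ) :
    ∑ l ∈ Finset.range (n + 1), ((2 * n + 1).choose (n - l) : ℚ) * (2 * l + 1 : ℚ) ^ (2 * α + 1)
      = (qPoly α).eval (n : ℚ) * (2 * n + 1 : ℚ) * ((2 * n).choose n : ℚ) := by
  exact main_aux α n
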